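/- Let 𝔛 be a Banach space regarded as a topological vector space with its weak topology, 𝔜 a Hausdorff topological vector space over ℂ, and Φ : 𝔛 → 𝔜 a continuous injective linear map with dense range. Let S_1, S_2 be bounded linear operators on 𝔛 and T_1, T_2 continuous linear operators on 𝔜 with T_i ∘ Φ = Φ ∘ S_i (i = 1, 2). Assume ‖S_2 x‖ ≤ ‖S_1 x‖ for all x ∈ 𝔛 and that the triple (Φ, S_1, T_1) admits an approximate inverse intertwining. Then for every y ∈ 𝔜 such that T_1 y = Φ x_1 for some x_1 ∈ 𝔛, there exists x_2 ∈ 𝔛 with T_2 y = Φ x_2 and ‖x_2‖ ≤ ‖x_1‖. -/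

import Mathlib

open Filter

/-- An approximate inverse intertwining for `(Φ, S, T)` where the Banach space `𝔛` carries
its weak topology: `F α (Φ x) → x` weakly in `𝔛`, `Φ (F α y) → y` in `𝔜`, and
`F α (T y) - S (F α y) → 0` weakly in `𝔛`, along the filter `l`. -/
def IsWeakAII {𝔛 : Type*} [NormedAddCommGroup 𝔛] [NormedSpace ℂ 𝔛]
    {𝔜 : Type*} [AddCommGroup 𝔜] [Module ℂ 𝔜] [TopologicalSpace 𝔜]
    {ι : Type*} (l : Filter ι)
    (Φ : 𝔛 →ₗ[ℂ] 𝔜) (S : 𝔛 →L[ℂ] 𝔛) (T : 𝔜 →L[ℂ] 𝔜)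
    (F : ι → (𝔜 →ₗ[ℂ] 𝔛)) : Prop :=
  (∀ x : 𝔛, Tendsto (fun α => (F α (Φ x) : WeakSpace ℂ 𝔛)) l (nhds (x : WeakSpace ℂ 𝔛))) ∧
  (∀ y : 𝔜, Tendsto (fun α => Φ (F α y)) l (nhds y)) ∧
  (∀ y : 𝔜, Tendsto (fun α => (F α (T y) - S (F α y) : WeakSpace ℂ 𝔛)) l
    (nhds (0 : WeakSpace ℂ 𝔛)))

/-- Let `Φ` intertwine the pairs `(Sᵢ, Tᵢ)`, `i = 1, 2`, where the Banach space `𝔛` is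
regarded with its weak topology, and suppose `‖S₂ x‖ ≤ ‖S₁ x‖` for all `x`. If
`(Φ, S₁, T₁)` has an approximate inverse intertwining, then `T₁⁻¹(Im Φ) ⊆ T₂⁻¹(Im Φ)` and
`‖Φ⁻¹ (T₂ y)‖ ≤ ‖Φ⁻¹ (T₁ y)‖` for every `y ∈ T₁⁻¹(Im Φ)`. -/
theorem exists_preimage_of_AII_norm_le
    {𝔛 : Type*} [NormedAddCommGroup 𝔛] [NormedSpace ℂ 𝔛] [CompleteSpace 𝔛]
    {𝔜 : Type*} [AddCommGroup 𝔜] [Module ℂ 𝔜] [TopologicalSpace 𝔜]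
    [IsTopologicalAddGroup 𝔜] [ContinuousSMul ℂ 𝔜] [T2Space 𝔜]
    (Φ : 𝔛 →ₗ[ℂ] 𝔜) (hΦc : Continuous fun x : WeakSpace ℂ 𝔛 => Φ x)
    (hΦinj : Function.Injective Φ) (hΦdr : DenseRange Φ)
    (S₁ S₂ : 𝔛 →L[ℂ] 𝔛) (T₁ T₂ : 𝔜 →L[ℂ] 𝔜)
    (h₁ : ∀ x, T₁ (Φ x) = Φ (S₁ x)) (h₂ : ∀ x, T₂ (Φ x) = Φ (S₂ x))
    (hnorm : ∀ x : 𝔛, ‖S₂ x‖ ≤ ‖S₁ x‖)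
    {ι : Type*} (l : Filter ι) [l.NeBot] (F : ι → (𝔜 →ₗ[ℂ] 𝔛))
    (hF : IsWeakAII l Φ S₁ T₁ F)
    (y : 𝔜) (x₁ : 𝔛) (hx₁ : T₁ y = Φ x₁) :
    ∃ x₂ : 𝔛, T₂ y = Φ x₂ ∧ ‖x₂‖ ≤ ‖x₁‖ := by
  classical
  obtain ⟨hF1, hF2, hF3⟩ := hF
  have hBinj : Function.Injective ((topDualPairing ℂ 𝔛).flip) := by
    intro a b hab
    rw [NormedSpace.eq_iff_forall_dual_eq ℂ]
    intro g
    exact congrArg (fun φ => φ g) hab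
  -- Step A : S₁ (F α y) → x₁ (the `nhds` in `IsWeakAII` are for the norm topology)
  have hA : Tendsto (fun α => S₁ (F α y)) l (nhds x₁) := by
    have h1 := hF1 x₁
    rw [← hx₁] at h1
    have h4 := h1.sub (hF3 y)
    simp only [sub_sub_cancel] at h4
    convert h4 using 2
    exact (sub_zero _).symm
  -- well-definedness of `S₂` on the range of `S₁`
  have hwd : ∀ a b : 𝔛, S₁ a = S₁ b → S₂ a = S₂ b := by
    intro a b hab
    have h := hnorm (a - b)
    rw [map_sub, map_sub, hab, sub_self, norm_zero] at h
    exact sub_eq_zero.mp (norm_le_zero_iff.mp h)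
  set M : Submodule ℂ 𝔛 := LinearMap.range (S₁ : 𝔛 →ₗ[ℂ] 𝔛) with hM
  -- Step B : x₁ lies in the norm closure of the range of S₁
  have hx₁cl : x₁ ∈ closure (M : Set 𝔛) :=
    mem_closure_of_tendsto hA (Eventually.of_forall fun α =>
      LinearMap.mem_range.mpr ⟨F α y, rfl⟩)
  -- Step C : approximating sequence
  obtain ⟨w, hw_mem, hw_tend⟩ := mem_closure_iff_seq_limit.mp hx₁cl
  choose u hu using fun n => LinearMap.mem_range.mp (hw_mem n)
  have hwt' : Tendsto (fun n => S₁ (u n)) atTop (nhds x₁) := by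
    have e : (fun n => S₁ (u n)) = w := funext hu
    rw [e]; exact hw_tend
  -- Step D : (S₂ (u n)) is Cauchy
  have hcau1 : CauchySeq (fun n => S₁ (u n)) := hwt'.cauchySeq
  have hcau2 : CauchySeq (fun n => S₂ (u n)) := by
    rw [Metric.cauchySeq_iff] at hcau1 ⊢
    intro ε hε
    obtain ⟨N, hN⟩ := hcau1 ε hε
    refine ⟨N, fun m hm n hn => lt_of_le_of_lt ?_ (hN m hm n hn)⟩
    rw [dist_eq_norm, dist_eq_norm, ← map_sub, ← map_sub]
    exact hnorm _
  obtain ⟨x₂, hx₂tend⟩ := cauchySeq_tendsto_of_complete hcau2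
  -- Step E : norm estimate
  have hle : ‖x₂‖ ≤ ‖x₁‖ :=
    le_of_tendsto_of_tendsto' hx₂tend.norm hwt'.norm fun n => hnorm (u n)
  -- Step F+G : S₂ (F α y) → x₂ weakly
  have hS₂w : Tendsto (fun α => toWeakSpace ℂ 𝔛 (S₂ (F α y))) l
      (@nhds (WeakSpace ℂ 𝔛) inferInstance (toWeakSpace ℂ 𝔛 x₂)) := by
    refine (WeakBilin.tendsto_iff_forall_eval_tendsto _ hBinj).mpr ?_
    intro f
    -- build a functional g with g ∘ S₁ = f ∘ S₂ via Hahn–Banach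
    have hsel : ∀ z : M, ∃ a, S₁ a = (z : 𝔛) := fun z => LinearMap.mem_range.mp z.2
    set a : M → 𝔛 := fun z => (hsel z).choose with ha_def
    have ha : ∀ z : M, S₁ (a z) = (z : 𝔛) := fun z => (hsel z).choose_spec
    have hS₂a : ∀ (z : M) (b : 𝔛), S₁ b = (z : 𝔛) → S₂ (a z) = S₂ b :=
      fun z b hb => hwd _ _ ((ha z).trans hb.symm)
    let p0 : M →ₗ[ℂ] ℂ :=
      { toFun := fun z => f (S₂ (a z))
        map_add' := fun z w => by
          show f (S₂ (a (z + w))) = f (S₂ (a z)) + f (S₂ (a w))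
          rw [hS₂a (z + w) (a z + a w) (by rw [map_add, ha, ha]; rfl), map_add, map_add]
        map_smul' := fun c z => by
          show f (S₂ (a (c • z))) = RingHom.id ℂ c • f (S₂ (a z))
          rw [hS₂a (c • z) (c • a z) (by rw [map_smul, ha]; rfl), map_smul, map_smul]
          rfl }
    have hp0 : ∀ z : M, ‖p0 z‖ ≤ ‖f‖ * ‖(z : 𝔛)‖ := by
      intro z
      calc ‖f (S₂ (a z))‖ ≤ ‖f‖ * ‖S₂ (a z)‖ := f.le_opNorm _
        _ ≤ ‖f‖ * ‖S₁ (a z)‖ := mul_le_mul_of_nonneg_left (hnorm _) (norm_nonneg f)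
        _ = ‖f‖ * ‖(z : 𝔛)‖ := by rw [ha]
    let p : M →L[ℂ] ℂ := p0.mkContinuous ‖f‖ hp0
    obtain ⟨g, hg_eq, -⟩ := exists_extension_norm_eq M p
    have hgS : ∀ b : 𝔛, g (S₁ b) = f (S₂ b) := by
      intro b
      have hmem : S₁ b ∈ M := LinearMap.mem_range.mpr ⟨b, rfl⟩
      have hco := hg_eq ⟨S₁ b, hmem⟩
      rw [hco]
      show f (S₂ (a ⟨S₁ b, hmem⟩)) = f (S₂ b)
      rw [hS₂a ⟨S₁ b, hmem⟩ b rfl]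
    have hgx₁ : Tendsto (fun n => f (S₂ (u n))) atTop (nhds (g x₁)) := by
      have h := (g.continuous.tendsto x₁).comp hwt'
      simpa only [Function.comp_def, hgS] using h
    have hfx₂ : Tendsto (fun n => f (S₂ (u n))) atTop (nhds (f x₂)) :=
      (f.continuous.tendsto x₂).comp hx₂tend
    have hgf : g x₁ = f x₂ := tendsto_nhds_unique hgx₁ hfx₂
    have hev : Tendsto (fun α => g (S₁ (F α y))) l (nhds (g x₁)) :=
      (g.continuous.tendsto x₁).comp hA
    rw [hgf] at hev
    exact (by simpa [hgS] using hev : Tendsto (fun α => f (S₂ (F α y))) l (nhds (f x₂)))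
  refine ⟨x₂, ?_, hle⟩
  have hΦS₂ : Tendsto (fun α => Φ (S₂ (F α y))) l (nhds (Φ x₂)) :=
    (hΦc.tendsto (toWeakSpace ℂ 𝔛 x₂)).comp hS₂w
  have hT₂ : Tendsto (fun α => T₂ (Φ (F α y))) l (nhds (T₂ y)) :=
    (T₂.continuous.tendsto y).comp (hF2 y)
  have heq : (fun α => T₂ (Φ (F α y))) = fun α => Φ (S₂ (F α y)) :=
    funext fun α => h₂ _
  rw [heq] at hT₂
  exact tendsto_nhds_unique hT₂ hΦS₂
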